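/- arXiv:2205.12363 — 2 statements merged into one kernel-verified Lean document; each statement's English description precedes it below -/
import Mathlib

section
/- (Supersaturation, weak form) Suppose 1 ≤ t ≤ n/2 and S ⊆ [q]^n satisfies |S| ≥ 2·q^n/V_q(n, t). Let E be the set of unordered pairs of distinct elements of S at Hamming distance at most 2t. Then |E| ≥ (q−1)n·|S|²·V_q(n,t) / (10·q·t·q^n); in particular |E| ≥ n·|S|²·V_q(n,t)/(20·t·q^n). -/
open Finset

/-- Volume of the q-ary Hamming ball of radius `r` in dimension `m`. -/
def V (q m r : ℕ) : ℕ := ∑ j ∈ Finset.range (r + 1), Nat.choose m j * (q - 1) ^ j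

/-- Hamming distance as a function on unordered pairs. -/
def hdist2 {q n : ℕ} : Sym2 (Fin n → Fin q) → ℕ :=
  Sym2.lift ⟨fun a b => hammingDist a b, fun a b => hammingDist_comm a b⟩

lemma V_pos (q m r : ℕ) : 0 < V q m r := by
  have h := Finset.single_le_sum (f := fun j => Nat.choose m j * (q-1)^j)
    (s := Finset.range (r+1)) (fun i _ => Nat.zero_le _)
    (Finset.mem_range.mpr (Nat.succ_pos r))
  have h' : 1 ≤ V q m r := by simpa [V] using h
  exact h'

lemma V_zero_dim (q r : ℕ) : V q 0 r = 1 := by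
  unfold V
  rw [Finset.sum_eq_single 0]
  · simp
  · intro b _ hb; simp [Nat.choose_eq_zero_of_lt (Nat.pos_of_ne_zero hb)]
  · simp

lemma V_zero_rad (q m : ℕ) : V q m 0 = 1 := by simp [V]

lemma V_succ (q n t : ℕ) : V q (n+1) (t+1) = V q n (t+1) + (q-1) * V q n t := by
  unfold V
  rw [Finset.sum_range_succ' (fun j => Nat.choose (n+1) j * (q-1)^j) (t+1),
      Finset.sum_range_succ' (fun j => Nat.choose n j * (q-1)^j) (t+1)]
  simp only [Nat.choose_succ_succ, add_mul, mul_add, Finset.sum_add_distrib, Finset.mul_sum,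
    pow_succ, Nat.succ_eq_add_one, Nat.choose_zero_right, mul_comm, mul_left_comm]
  ring

lemma hammingDist_eq_sum {q m : ℕ} (z w : Fin m → Fin q) :
    hammingDist z w = ∑ i, if z i ≠ w i then 1 else 0 := by
  rw [hammingDist, Finset.card_filter]

lemma hammingDist_cons {q n : ℕ} (x y : Fin q) (u v : Fin n → Fin q) :
    hammingDist (Fin.cons x u : Fin (n+1) → Fin q) (Fin.cons y v) =
      (if x = y then 0 else 1) + hammingDist u v := by
  rw [hammingDist_eq_sum, hammingDist_eq_sum, Fin.sum_univ_succ]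
  simp only [Fin.cons_zero, Fin.cons_succ, ne_eq, ite_not]

lemma hammingDist_split {q n : ℕ} (z a : Fin (n+1) → Fin q) :
    hammingDist z a = (if z 0 = a 0 then 0 else 1) + hammingDist (Fin.tail z) (Fin.tail a) := by
  conv_lhs => rw [← Fin.cons_self_tail z, ← Fin.cons_self_tail a]
  rw [hammingDist_cons]

/-- decompose function space at coordinate 0 -/
def splitEquiv (q n : ℕ) : (Fin (n+1) → Fin q) ≃ Fin q × (Fin n → Fin q) where
  toFun z := (z 0, Fin.tail z)
  invFun p := Fin.cons p.1 p.2
  left_inv z := Fin.cons_self_tail z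
  right_inv p := by simp [Fin.tail]

lemma sum_ite_eq_card {α : Type*} [Fintype α] [DecidableEq α] (c0 : α) (X Y : ℕ) :
    ∑ c : α, (if c = c0 then X else Y) = X + (Fintype.card α - 1) * Y := by
  rw [← Finset.sum_erase_add _ _ (Finset.mem_univ c0)]
  rw [Finset.sum_congr rfl (fun c hc => if_neg (Finset.ne_of_mem_erase hc))]
  simp [Finset.card_erase_of_mem, mul_comm, Nat.add_comm]

lemma prod_count (q n : ℕ) (c0 : Fin q) (b : Fin n → Fin q) (t : ℕ) :
    #(univ.filter fun p : Fin q × (Fin n → Fin q) =>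
        (if p.1 = c0 then 0 else 1) + hammingDist p.2 b ≤ t)
      = #(univ.filter fun w : Fin n → Fin q => hammingDist w b ≤ t)
        + (q-1) * #(univ.filter fun w : Fin n → Fin q => hammingDist w b + 1 ≤ t) := by
  rw [Finset.card_filter, Fintype.sum_prod_type]
  have step : ∀ c : Fin q, (∑ w : Fin n → Fin q,
      if (if c = c0 then 0 else 1) + hammingDist w b ≤ t then 1 else 0)
      = if c = c0 then #(univ.filter fun w : Fin n → Fin q => hammingDist w b ≤ t)
        else #(univ.filter fun w : Fin n → Fin q => hammingDist w b + 1 ≤ t) := by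
    intro c
    by_cases h : c = c0
    · rw [if_pos h, Finset.card_filter]
      simp [h]
    · rw [if_neg h, Finset.card_filter]
      simp [h, Nat.add_comm 1]
  rw [Finset.sum_congr rfl (fun c _ => step c), sum_ite_eq_card]
  simp

lemma ball_card (q : ℕ) : ∀ (n t : ℕ) (a : Fin n → Fin q),
    #(univ.filter fun z : Fin n → Fin q => hammingDist z a ≤ t) = V q n t := by
  intro n
  induction n with
  | zero =>
    intro t a
    rw [Finset.filter_true_of_mem (fun z _ => by simp [Subsingleton.elim z a]), V_zero_dim]
    simp
  | succ n ih =>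
    intro t a
    have key : #(univ.filter fun z : Fin (n+1) → Fin q => hammingDist z a ≤ t)
        = #(univ.filter fun p : Fin q × (Fin n → Fin q) =>
            (if p.1 = a 0 then 0 else 1) + hammingDist p.2 (Fin.tail a) ≤ t) := by
      apply Finset.card_equiv (splitEquiv q n)
      intro z
      simp only [Finset.mem_filter, Finset.mem_univ, true_and, splitEquiv, Equiv.coe_fn_mk]
      rw [← hammingDist_split]
    rw [key, prod_count]
    match t with
    | 0 =>
      have h1 : #(univ.filter fun w : Fin n → Fin q => hammingDist w (Fin.tail a) + 1 ≤ 0) = 0 := by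
        simp
      rw [ih 0 (Fin.tail a), h1, V_zero_rad, V_zero_rad]
      simp
    | (t+1) =>
      have h1 : #(univ.filter fun w : Fin n → Fin q => hammingDist w (Fin.tail a) + 1 ≤ t + 1)
          = V q n t := by
        simp only [Nat.add_le_add_iff_right]
        exact ih t (Fin.tail a)
      rw [ih (t+1) (Fin.tail a), h1, V_succ]

lemma halfball_card (q n t : ℕ) (a : Fin (n+1) → Fin q) :
    #(univ.filter fun z : Fin (n+1) → Fin q => z 0 ≠ a 0 ∧ hammingDist z a ≤ t + 1)
      = (q-1) * V q n t := by
  have key : #(univ.filter fun z : Fin (n+1) → Fin q => z 0 ≠ a 0 ∧ hammingDist z a ≤ t + 1)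
      = #(univ.filter fun p : Fin q × (Fin n → Fin q) =>
          p.1 ≠ a 0 ∧ hammingDist p.2 (Fin.tail a) ≤ t) := by
    apply Finset.card_equiv (splitEquiv q n)
    intro z
    simp only [Finset.mem_filter, Finset.mem_univ, true_and, splitEquiv, Equiv.coe_fn_mk]
    rw [hammingDist_split z a]
    constructor
    · rintro ⟨h1, h2⟩; rw [if_neg h1] at h2; exact ⟨h1, by omega⟩
    · rintro ⟨h1, h2⟩; exact ⟨h1, by rw [if_neg h1]; omega⟩
  rw [key, Finset.card_filter, Fintype.sum_prod_type]
  have step : ∀ c : Fin q,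
      (∑ w : Fin n → Fin q, if c ≠ a 0 ∧ hammingDist w (Fin.tail a) ≤ t then 1 else 0)
      = if c = a 0 then 0 else V q n t := by
    intro c
    by_cases h : c = a 0
    · simp [h]
    · rw [if_neg h, ← ball_card q n t (Fin.tail a), Finset.card_filter]
      simp [h]
  rw [Finset.sum_congr rfl fun c _ => step c, sum_ite_eq_card]
  simp

lemma hammingDist_perm {q n : ℕ} (σ : Equiv.Perm (Fin n)) (z a : Fin n → Fin q) :
    hammingDist (z ∘ σ) (a ∘ σ) = hammingDist z a := by
  unfold hammingDist
  apply Finset.card_equiv σ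
  simp

lemma inter_bound (q n t : ℕ) (a b : Fin (n+1) → Fin q) (hab : a ≠ b) :
    #(univ.filter fun z : Fin (n+1) → Fin q =>
        hammingDist z a ≤ t + 1 ∧ hammingDist z b ≤ t + 1)
      ≤ 2 * ((q-1) * V q n t) := by
  obtain ⟨i, hi⟩ := Function.ne_iff.mp hab
  have hsub : (univ.filter fun z : Fin (n+1) → Fin q =>
        hammingDist z a ≤ t + 1 ∧ hammingDist z b ≤ t + 1)
      ⊆ (univ.filter fun z : Fin (n+1) → Fin q => z i ≠ a i ∧ hammingDist z a ≤ t + 1)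
        ∪ (univ.filter fun z : Fin (n+1) → Fin q => z i ≠ b i ∧ hammingDist z b ≤ t + 1) := by
    intro z hz
    simp only [Finset.mem_filter, Finset.mem_univ, true_and, Finset.mem_union] at hz ⊢
    by_cases h : z i = a i
    · exact Or.inr ⟨by rw [h]; exact hi, hz.2⟩
    · exact Or.inl ⟨h, hz.1⟩
  refine le_trans (Finset.card_le_card hsub) (le_trans (Finset.card_union_le _ _) ?_)
  have gen : ∀ c : Fin (n+1) → Fin q,
      #(univ.filter fun z : Fin (n+1) → Fin q => z i ≠ c i ∧ hammingDist z c ≤ t + 1)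
        = (q-1) * V q n t := by
    intro c
    rw [← halfball_card q n t (c ∘ Equiv.swap 0 i)]
    apply Finset.card_equiv (Equiv.arrowCongr (Equiv.swap 0 i) (Equiv.refl (Fin q)))
    intro z
    have h0 : (Equiv.arrowCongr (Equiv.swap 0 i) (Equiv.refl (Fin q))) z
        = z ∘ (Equiv.swap 0 i) := by
      ext j; simp [Equiv.arrowCongr]
    rw [h0]
    simp only [Finset.mem_filter, Finset.mem_univ, true_and]
    rw [hammingDist_perm (Equiv.swap 0 i) z c]
    have e1 : (z ∘ (Equiv.swap 0 i)) 0 = z i := by simp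
    have e2 : (c ∘ (Equiv.swap 0 i)) 0 = c i := by simp
    rw [e1, e2]
  rw [gen a, gen b]; omega

lemma key_ineq (q n t : ℕ) : (q-1) * ((n+1) * V q n t) ≤ (t+1) * V q (n+1) (t+1) := by
  unfold V
  rw [Finset.sum_range_succ' (fun j => Nat.choose (n+1) j * (q-1)^j) (t+1)]
  calc (q-1) * ((n+1) * ∑ j ∈ Finset.range (t+1), Nat.choose n j * (q-1)^j)
      = ∑ j ∈ Finset.range (t+1), ((n+1) * Nat.choose n j) * (q-1)^(j+1) := by
        rw [Finset.mul_sum, Finset.mul_sum]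
        apply Finset.sum_congr rfl; intro j _; ring
    _ = ∑ j ∈ Finset.range (t+1), (Nat.choose (n+1) (j+1) * (j+1)) * (q-1)^(j+1) := by
        apply Finset.sum_congr rfl; intro j _; rw [Nat.add_one_mul_choose_eq]
    _ ≤ ∑ j ∈ Finset.range (t+1), (t+1) * (Nat.choose (n+1) (j+1) * (q-1)^(j+1)) := by
        apply Finset.sum_le_sum; intro j hj
        have hjt : j + 1 ≤ t + 1 := Finset.mem_range.mp hj
        have h2 : Nat.choose (n+1) (j+1) * (j+1) * (q-1)^(j+1)
            = (j+1) * (Nat.choose (n+1) (j+1) * (q-1)^(j+1)) := by ring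
        rw [h2]
        exact Nat.mul_le_mul_right _ hjt
    _ = (t+1) * ∑ j ∈ Finset.range (t+1), Nat.choose (n+1) (j+1) * (q-1)^(j+1) :=
        (Finset.mul_sum _ _ _).symm
    _ ≤ (t+1) * (∑ j ∈ Finset.range (t+1), Nat.choose (n+1) (j+1) * (q-1)^(j+1)
          + Nat.choose (n+1) 0 * (q-1)^0) := Nat.mul_le_mul_left _ (Nat.le_add_right _ _)

lemma pair_card {q n : ℕ} (S : Finset (Fin n → Fin q)) (r : ℕ) :
    #((S ×ˢ S).filter fun p => p.1 ≠ p.2 ∧ hammingDist p.1 p.2 ≤ r)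
      = 2 * #(S.sym2.filter fun e => ¬ e.IsDiag ∧ hdist2 e ≤ r) := by
  have H : ∀ p ∈ (S ×ˢ S).filter fun p => p.1 ≠ p.2 ∧ hammingDist p.1 p.2 ≤ r,
      Sym2.mk p.1 p.2 ∈ S.sym2.filter fun e => ¬ e.IsDiag ∧ hdist2 e ≤ r := by
    rintro ⟨x, y⟩ hp
    simp only [Finset.mem_filter, Finset.mem_product] at hp
    simp only [Finset.mem_filter, Finset.mk_mem_sym2_iff, Sym2.mk_isDiag_iff]
    exact ⟨⟨hp.1.1, hp.1.2⟩, hp.2.1, by simpa [hdist2] using hp.2.2⟩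
  rw [Finset.card_eq_sum_card_fiberwise H]
  have fib : ∀ e ∈ S.sym2.filter fun e => ¬ e.IsDiag ∧ hdist2 e ≤ r,
      #(((S ×ˢ S).filter fun p => p.1 ≠ p.2 ∧ hammingDist p.1 p.2 ≤ r).filter
        fun p => Sym2.mk p.1 p.2 = e) = 2 := by
    intro e he
    induction e using Sym2.ind with
    | _ x y =>
      simp only [Finset.mem_filter, Finset.mk_mem_sym2_iff, Sym2.mk_isDiag_iff] at he
      obtain ⟨⟨hx, hy⟩, hxy, hd⟩ := he
      have hd' : hammingDist x y ≤ r := by simpa [hdist2] using hd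
      have hset : (((S ×ˢ S).filter fun p => p.1 ≠ p.2 ∧ hammingDist p.1 p.2 ≤ r).filter
          fun p => Sym2.mk p.1 p.2 = s(x,y)) = {(x,y), (y,x)} := by
        ext ⟨p1, p2⟩
        simp only [Finset.mem_filter, Finset.mem_product, Finset.mem_insert,
          Finset.mem_singleton, Prod.mk.injEq]
        constructor
        · rintro ⟨⟨-, -⟩, h⟩
          rw [show Sym2.mk p1 p2 = s(p1, p2) from rfl, Sym2.eq_iff] at h
          rcases h with ⟨rfl, rfl⟩ | ⟨rfl, rfl⟩
          · left; exact ⟨rfl, rfl⟩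
          · right; exact ⟨rfl, rfl⟩
        · rintro (⟨rfl, rfl⟩ | ⟨rfl, rfl⟩)
          · exact ⟨⟨⟨hx, hy⟩, hxy, hd'⟩, rfl⟩
          · exact ⟨⟨⟨hy, hx⟩, Ne.symm hxy, by rwa [hammingDist_comm]⟩, Sym2.eq_swap⟩
      rw [hset, Finset.card_insert_of_notMem, Finset.card_singleton]
      simp only [Finset.mem_singleton, Prod.mk.injEq, not_and]
      intro h _; exact hxy h
  rw [Finset.sum_congr rfl fib, Finset.sum_const, smul_eq_mul, mul_comm]

lemma iteMulIte (P Q : Prop) [Decidable P] [Decidable Q] :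
    ((if P then (1:ℕ) else 0) * (if Q then 1 else 0)) = if P ∧ Q then 1 else 0 := by
  by_cases hP : P <;> by_cases hQ : Q <;> simp [hP, hQ]

lemma inter_bound' (q n t : ℕ) (hn : 1 ≤ n) (ht : 1 ≤ t) (a b : Fin n → Fin q) (hab : a ≠ b) :
    #(univ.filter fun z : Fin n → Fin q => hammingDist z a ≤ t ∧ hammingDist z b ≤ t)
      ≤ 2 * ((q-1) * V q (n-1) (t-1)) := by
  obtain ⟨n', rfl⟩ : ∃ n', n = n' + 1 := ⟨n-1, by omega⟩
  obtain ⟨t', rfl⟩ : ∃ t', t = t' + 1 := ⟨t-1, by omega⟩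
  simpa using inter_bound q n' t' a b hab

lemma key_ineq' (q n t : ℕ) (hn : 1 ≤ n) (ht : 1 ≤ t) :
    (q-1) * (n * V q (n-1) (t-1)) ≤ t * V q n t := by
  obtain ⟨n', rfl⟩ : ∃ n', n = n' + 1 := ⟨n-1, by omega⟩
  obtain ⟨t', rfl⟩ : ∃ t', t = t' + 1 := ⟨t-1, by omega⟩
  simpa using key_ineq q n' t'

lemma final_arith (qq nn tt M Vq Nq Ec Iq : ℚ) (hqq : 2 ≤ qq) (htq : 0 < tt) (hnq : 0 < nn)
    (hVqpos : 0 < Vq) (hNqpos : 0 < Nq) (hMnn : 0 ≤ M) (hEcnn : 0 ≤ Ec) (hIqnn : 0 ≤ Iq)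
    (hA : 2 * Nq ≤ M * Vq) (hB : (M * Vq)^2 ≤ Nq * (M * Vq + 2 * Ec * Iq))
    (hC : nn * Iq ≤ 2 * (tt * Vq)) :
    (qq - 1) * nn * M^2 * Vq / (10 * qq * tt * Nq) ≤ Ec ∧
    nn * M^2 * Vq / (20 * tt * Nq) ≤ Ec := by
  have hMVnn : (0:ℚ) ≤ M * Vq := mul_nonneg hMnn (le_of_lt hVqpos)
  have s1 : (M * Vq)^2 ≤ 4 * Nq * Ec * Iq := by
    nlinarith [hB, mul_le_mul_of_nonneg_right hA hMVnn]
  have s3 : nn * M^2 * Vq ≤ 8 * (tt * Nq * Ec) := by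
    have s2 : (nn * M^2 * Vq) * Vq ≤ (8 * (tt * Nq * Ec)) * Vq := by
      nlinarith [mul_le_mul_of_nonneg_left s1 (le_of_lt hnq),
        mul_le_mul_of_nonneg_left hC
          (by positivity : (0:ℚ) ≤ 4 * Nq * Ec),
        hEcnn, hNqpos]
    exact le_of_mul_le_mul_right s2 hVqpos
  constructor
  · rw [div_le_iff₀ (by positivity)]
    nlinarith [mul_le_mul_of_nonneg_left s3 (by linarith : (0:ℚ) ≤ qq - 1),
      mul_nonneg (mul_nonneg (le_of_lt htq) (le_of_lt hNqpos)) hEcnn]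
  · rw [div_le_iff₀ (by positivity)]
    nlinarith [s3, mul_nonneg (mul_nonneg (le_of_lt htq) (le_of_lt hNqpos)) hEcnn]

theorem stmt13 (q n t : ℕ) (hq : 2 ≤ q) (hn : 2 ≤ n) (ht : 1 ≤ t) (htn : 2 * t ≤ n)
    (S : Finset (Fin n → Fin q))
    (hS : 2 * q ^ n ≤ S.card * V q n t)
    (E : Finset (Sym2 (Fin n → Fin q)))
    (hE : E = S.sym2.filter (fun e => ¬ e.IsDiag ∧ hdist2 e ≤ 2 * t)) :
    ((q : ℚ) - 1) * n * S.card ^ 2 * V q n t / (10 * q * t * q ^ n) ≤ (E.card : ℚ) ∧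
    (n : ℚ) * S.card ^ 2 * V q n t / (20 * t * q ^ n) ≤ (E.card : ℚ) := by
  set K : (Fin n → Fin q) → ℕ := fun x => #(S.filter fun a => hammingDist a x ≤ t) with hK
  -- first moment
  have h1 : ∑ x : Fin n → Fin q, K x = S.card * V q n t := by
    simp only [hK, Finset.card_filter]
    rw [Finset.sum_comm]
    have inner : ∀ a : Fin n → Fin q,
        (∑ x : Fin n → Fin q, if hammingDist a x ≤ t then 1 else 0) = V q n t := by
      intro a
      rw [← ball_card q n t a, Finset.card_filter]
      exact Finset.sum_congr rfl fun x _ => by rw [hammingDist_comm]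
    rw [Finset.sum_congr rfl fun a _ => inner a, Finset.sum_const, smul_eq_mul]
  -- second moment
  set m : (Fin n → Fin q) → (Fin n → Fin q) → ℕ := fun a b =>
    #(univ.filter fun x : Fin n → Fin q => hammingDist x a ≤ t ∧ hammingDist x b ≤ t) with hm
  have h2 : ∑ x : Fin n → Fin q, K x * K x = ∑ a ∈ S, ∑ b ∈ S, m a b := by
    have step : ∀ x : Fin n → Fin q, K x * K x
        = ∑ a ∈ S, ∑ b ∈ S, (if hammingDist x a ≤ t ∧ hammingDist x b ≤ t then 1 else 0) := by
      intro x
      simp only [hK, Finset.card_filter]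
      rw [Finset.sum_mul_sum]
      exact Finset.sum_congr rfl fun a _ => Finset.sum_congr rfl fun b _ => by
        rw [iteMulIte]
        congr 1
        rw [hammingDist_comm a x, hammingDist_comm b x]
    rw [Finset.sum_congr rfl fun x _ => step x, Finset.sum_comm]
    apply Finset.sum_congr rfl; intro a _
    rw [Finset.sum_comm]
    apply Finset.sum_congr rfl; intro b _
    simp only [hm, Finset.card_filter]
  set I₀ : ℕ := 2 * ((q-1) * V q (n-1) (t-1)) with hI₀
  set P : Finset ((Fin n → Fin q) × (Fin n → Fin q)) :=
    (S ×ˢ S).filter fun p => p.1 ≠ p.2 ∧ hammingDist p.1 p.2 ≤ 2*t with hP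
  have hm_diag : ∀ a : Fin n → Fin q, m a a = V q n t := by
    intro a
    simp only [hm]
    rw [← ball_card q n t a]
    congr 1
    apply Finset.filter_congr
    intro x _; simp
  have hm_off : ∀ a b : Fin n → Fin q, a ≠ b →
      m a b ≤ if hammingDist a b ≤ 2*t then I₀ else 0 := by
    intro a b hab
    by_cases hd : hammingDist a b ≤ 2*t
    · rw [if_pos hd, hI₀]
      exact inter_bound' q n t (by omega) ht a b hab
    · rw [if_neg hd]
      have hempty : (univ.filter fun x : Fin n → Fin q =>
          hammingDist x a ≤ t ∧ hammingDist x b ≤ t) = ∅ := by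
        ext x
        simp only [Finset.mem_filter, Finset.mem_univ, true_and, Finset.notMem_empty,
          iff_false, not_and]
        intro hxa hxb
        apply hd
        have htri := hammingDist_triangle a x b
        rw [hammingDist_comm a x] at htri
        omega
      simp [hm, hempty]
  have h3 : ∑ a ∈ S, ∑ b ∈ S, m a b ≤ S.card * V q n t + #P * I₀ := by
    have step : ∑ a ∈ S, ∑ b ∈ S, m a b ≤ ∑ a ∈ S, ∑ b ∈ S,
        ((if a = b then V q n t else 0)
          + (if a ≠ b ∧ hammingDist a b ≤ 2*t then I₀ else 0)) := by
      apply Finset.sum_le_sum; intro a _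
      apply Finset.sum_le_sum; intro b _
      by_cases hab : a = b
      · subst hab
        rw [if_pos rfl, hm_diag a]
        simp
      · rw [if_neg hab, zero_add]
        have hoff := hm_off a b hab
        by_cases hd : hammingDist a b ≤ 2*t
        · rw [if_pos ⟨hab, hd⟩]; rwa [if_pos hd] at hoff
        · rw [if_neg (by tauto)]; rwa [if_neg hd] at hoff
    refine le_trans step (le_of_eq ?_)
    have split : ∑ a ∈ S, ∑ b ∈ S,
        ((if a = b then V q n t else 0)
          + (if a ≠ b ∧ hammingDist a b ≤ 2*t then I₀ else 0))
        = (∑ a ∈ S, ∑ b ∈ S, (if a = b then V q n t else 0))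
          + ∑ a ∈ S, ∑ b ∈ S, (if a ≠ b ∧ hammingDist a b ≤ 2*t then I₀ else 0) := by
      rw [← Finset.sum_add_distrib]
      exact Finset.sum_congr rfl fun a _ => by rw [← Finset.sum_add_distrib]
    rw [split]
    congr 1
    · -- diagonal part
      have : ∀ a ∈ S, (∑ b ∈ S, (if a = b then V q n t else 0)) = V q n t := by
        intro a ha
        rw [Finset.sum_ite_eq S a (fun _ => V q n t), if_pos ha]
      rw [Finset.sum_congr rfl this, Finset.sum_const, smul_eq_mul]
    · -- off-diagonal part
      rw [← Finset.sum_product' S S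
        (fun a b => if a ≠ b ∧ hammingDist a b ≤ 2*t then I₀ else 0)]
      rw [hP, ← Finset.sum_filter, Finset.sum_const, smul_eq_mul]
  -- relate P to E
  have hP2 : #P = 2 * #E := by
    rw [hP, hE]
    exact pair_card S (2*t)
  -- Cauchy-Schwarz over ℚ
  have hcard_univ : #(univ : Finset (Fin n → Fin q)) = q ^ n := by
    simp [Fintype.card_fun]
  have hCS : (∑ x : Fin n → Fin q, (K x : ℚ))^2
      ≤ (q:ℚ)^n * ∑ x : Fin n → Fin q, (K x : ℚ)^2 := by
    have h := sq_sum_le_card_mul_sum_sq (s := (univ : Finset (Fin n → Fin q)))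
      (f := fun x => (K x : ℚ))
    rw [hcard_univ] at h
    push_cast at h
    exact h
  -- cast everything to ℚ
  have hsum1 : ∑ x : Fin n → Fin q, (K x : ℚ) = (S.card : ℚ) * (V q n t : ℚ) := by
    exact_mod_cast congrArg (Nat.cast : ℕ → ℚ) h1
  have h23 : ∑ x : Fin n → Fin q, K x * K x ≤ S.card * V q n t + (2 * #E) * I₀ :=
    h2 ▸ (hP2 ▸ h3)
  have hsum2 : ∑ x : Fin n → Fin q, (K x : ℚ)^2
      ≤ (S.card : ℚ) * (V q n t) + (2 * (#E:ℚ)) * (I₀:ℚ) := by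
    calc ∑ x : Fin n → Fin q, (K x : ℚ)^2
        = ((∑ x : Fin n → Fin q, K x * K x : ℕ) : ℚ) := by
          push_cast
          exact Finset.sum_congr rfl fun x _ => pow_two _
      _ ≤ ((S.card * V q n t + (2 * #E) * I₀ : ℕ) : ℚ) := by exact_mod_cast h23
      _ = (S.card : ℚ) * (V q n t) + (2 * (#E:ℚ)) * (I₀:ℚ) := by push_cast; ring
  have hCnat : n * I₀ ≤ 2 * (t * V q n t) := by
    have hk := key_ineq' q n t (by omega) ht
    calc n * I₀ = 2 * ((q-1) * (n * V q (n-1) (t-1))) := by rw [hI₀]; ring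
      _ ≤ 2 * (t * V q n t) := Nat.mul_le_mul_left 2 hk
  -- rational arithmetic
  have hA : 2 * ((q:ℚ))^n ≤ (S.card : ℚ) * (V q n t : ℚ) := by exact_mod_cast hS
  have hC : (n:ℚ) * (I₀:ℚ) ≤ 2 * ((t:ℚ) * (V q n t : ℚ)) := by exact_mod_cast hCnat
  have hB : ((S.card:ℚ) * (V q n t : ℚ))^2
      ≤ ((q:ℚ))^n * ((S.card:ℚ) * (V q n t : ℚ) + 2 * (#E:ℚ) * (I₀:ℚ)) := by
    calc ((S.card:ℚ) * (V q n t : ℚ))^2 = (∑ x : Fin n → Fin q, (K x : ℚ))^2 := by rw [hsum1]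
      _ ≤ ((q:ℚ))^n * ∑ x : Fin n → Fin q, (K x : ℚ)^2 := hCS
      _ ≤ ((q:ℚ))^n * ((S.card:ℚ) * (V q n t : ℚ) + 2 * (#E:ℚ) * (I₀:ℚ)) := by
          apply mul_le_mul_of_nonneg_left _ (by positivity)
          calc ∑ x : Fin n → Fin q, (K x : ℚ)^2
              ≤ (S.card : ℚ) * (V q n t) + (2 * (#E:ℚ)) * (I₀:ℚ) := hsum2
            _ = (S.card:ℚ) * (V q n t : ℚ) + 2 * (#E:ℚ) * (I₀:ℚ) := by ring
  exact final_arith (q:ℚ) n t (S.card) (V q n t) ((q:ℚ)^n) (#E) (I₀)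
    (by exact_mod_cast hq) (by exact_mod_cast ht) (by exact_mod_cast (by omega : 0 < n))
    (by exact_mod_cast V_pos q n t) (by positivity) (by positivity) (by positivity)
    (by positivity) hA hB hC
end

section
/- (Injection lemma for ball intersections) Let u = 1^n, v = 2^k 1^{n−k}, and w = 2^{k+1} 1^{n−k−1} in [q]^n, with 0 ≤ k ≤ t and k+1 ≤ n. Then there is an injection from B(u,t) ∩ B(w,t) \ B(v,t) into B(u,t) ∩ B(v,t) \ B(w,t) given by changing the (k+1)st coordinate from 2 to 1; consequently |B(u,t) ∩ B(w,t)| ≤ |B(u,t) ∩ B(v,t)|. -/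
/-- The Hamming ball of radius `r` around `x` in `[q]^n`. -/
def ball {q n : ℕ} (x : Fin n → Fin q) (r : ℕ) : Finset (Fin n → Fin q) :=
  Finset.univ.filter (fun y => hammingDist x y ≤ r)

/-- The standard vector whose first `k` coordinates are `1` (playing the role of "2")
and the rest are `0` (playing the role of "1"). -/
def stdVec (q n : ℕ) [NeZero q] (k : ℕ) : Fin n → Fin q :=
  fun i => if (i : ℕ) < k then 1 else 0

lemma hd_sum {q n : ℕ} (a y : Fin n → Fin q) :
    hammingDist a y = ∑ j, if a j ≠ y j then 1 else 0 := by
  simp [hammingDist, Finset.card_filter]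

lemma hd_update {q n : ℕ} (a x : Fin n → Fin q) (i : Fin n) (c : Fin q) :
    hammingDist a (Function.update x i c) + (if a i ≠ x i then 1 else 0)
      = hammingDist a x + (if a i ≠ c then 1 else 0) := by
  rw [hd_sum, hd_sum, ← Finset.sum_erase_add _ _ (Finset.mem_univ i),
    ← Finset.sum_erase_add _ _ (Finset.mem_univ i)]
  have h : ∀ j ∈ Finset.univ.erase i,
      (if a j ≠ Function.update x i c j then 1 else 0) = if a j ≠ x j then 1 else 0 := by
    intro j hj
    rw [Function.update_of_ne (Finset.ne_of_mem_erase hj)]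
  rw [Finset.sum_congr rfl h, Function.update_self]
  ring

lemma hd_pair {q n : ℕ} (v w x : Fin n → Fin q) (i : Fin n)
    (h : ∀ j, j ≠ i → v j = w j) :
    hammingDist v x + (if w i ≠ x i then 1 else 0)
      = hammingDist w x + (if v i ≠ x i then 1 else 0) := by
  rw [hd_sum, hd_sum, ← Finset.sum_erase_add _ _ (Finset.mem_univ i),
    ← Finset.sum_erase_add _ _ (Finset.mem_univ i)]
  have hh : ∀ j ∈ Finset.univ.erase i,
      (if v j ≠ x j then 1 else 0) = if w j ≠ x j then 1 else 0 := by
    intro j hj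
    rw [h j (Finset.ne_of_mem_erase hj)]
  rw [Finset.sum_congr rfl hh]
  ring

theorem stmt16 (q n t k : ℕ) [NeZero q] (hq : 2 ≤ q) (hn : 1 ≤ n) (hkt : k ≤ t)
    (hkn : k + 1 ≤ n)
    (u v w : Fin n → Fin q) (hu : u = stdVec q n 0) (hv : v = stdVec q n k)
    (hw : w = stdVec q n (k + 1))
    (φ : (Fin n → Fin q) → (Fin n → Fin q))
    (hφ : φ = fun x => Function.update x (⟨k, hkn⟩ : Fin n) 0) :
    (∀ x ∈ (ball u t ∩ ball w t) \ ball v t, φ x ∈ (ball u t ∩ ball v t) \ ball w t) ∧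
    Set.InjOn φ ((ball u t ∩ ball w t) \ ball v t : Finset (Fin n → Fin q)) ∧
    (ball u t ∩ ball w t).card ≤ (ball u t ∩ ball v t).card := by
  set i0 : Fin n := ⟨k, hkn⟩ with hi0
  have h10 : (1 : Fin q) ≠ 0 := by
    have hval : ((1 : Fin q) : ℕ) = 1 := by
      rw [Fin.val_one']
      exact Nat.mod_eq_of_lt hq
    intro h
    rw [h] at hval
    simp at hval
  have hui : u i0 = 0 := by simp [hu, stdVec]
  have hvi : v i0 = 0 := by simp [hv, stdVec, hi0]
  have hwi : w i0 = 1 := by simp [hw, stdVec, hi0]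
  have hvw : ∀ j, j ≠ i0 → v j = w j := by
    intro j hj
    have hj' : (j : ℕ) ≠ k := fun h => hj (Fin.ext h)
    simp only [hv, hw, stdVec]
    rcases lt_or_ge (j : ℕ) k with h | h
    · rw [if_pos h, if_pos (by omega)]
    · rw [if_neg (by omega), if_neg (by omega)]
  -- membership characterization
  have mem_iff : ∀ x, x ∈ (ball u t ∩ ball w t) \ ball v t ↔
      hammingDist u x ≤ t ∧ hammingDist w x ≤ t ∧ t < hammingDist v x := by
    intro x
    simp [ball, Finset.mem_sdiff, Finset.mem_inter, Finset.mem_filter, and_assoc, not_le]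
  have key : ∀ x, x ∈ (ball u t ∩ ball w t) \ ball v t →
      x i0 = 1 ∧ hammingDist v x = t + 1 ∧ hammingDist w x = t := by
    intro x hx
    rw [mem_iff] at hx
    obtain ⟨h1, h2, h3⟩ := hx
    have hp := hd_pair v w x i0 hvw
    rw [hvi, hwi] at hp
    have hx1 : x i0 = 1 := by
      by_contra hne
      rw [if_pos (fun h => hne h.symm)] at hp
      rcases eq_or_ne (x i0) 0 with h0 | h0
      · rw [h0, if_neg (by simp)] at hp; omega
      · rw [if_pos (fun h => h0 h.symm)] at hp; omega
    rw [hx1, if_neg (by simp), if_pos (fun h => h10 h.symm)] at hp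
    exact ⟨hx1, by omega, by omega⟩
  have maps : ∀ x ∈ (ball u t ∩ ball w t) \ ball v t,
      φ x ∈ (ball u t ∩ ball v t) \ ball w t := by
    intro x hx
    obtain ⟨hx1, hvx, hwx⟩ := key x hx
    rw [mem_iff] at hx
    obtain ⟨h1, h2, h3⟩ := hx
    have hupd_u := hd_update u x i0 0
    have hupd_v := hd_update v x i0 0
    have hupd_w := hd_update w x i0 0
    rw [hui, hx1, if_pos (fun h => h10 h.symm), if_neg (by simp)] at hupd_u
    rw [hvi, hx1, if_pos (fun h => h10 h.symm), if_neg (by simp)] at hupd_v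
    rw [hwi, hx1, if_neg (by simp), if_pos h10] at hupd_w
    simp only [hφ, ball, Finset.mem_sdiff, Finset.mem_inter, Finset.mem_filter,
      Finset.mem_univ, true_and, not_le]
    refine ⟨⟨by omega, by omega⟩, by omega⟩
  have inj : Set.InjOn φ ((ball u t ∩ ball w t) \ ball v t : Finset (Fin n → Fin q)) := by
    intro x hx y hy hxy
    have hx1 := (key x hx).1
    have hy1 := (key y hy).1
    funext j
    rcases eq_or_ne j i0 with rfl | hj
    · rw [hx1, hy1]
    · have := congrFun hxy j
      simpa [hφ, Function.update_of_ne hj] using this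
  refine ⟨maps, inj, ?_⟩
  have hcard : ((ball u t ∩ ball w t) \ ball v t).card ≤
      ((ball u t ∩ ball v t) \ ball w t).card :=
    Finset.card_le_card_of_injOn φ maps inj
  have e1 := Finset.card_inter_add_card_sdiff (ball u t ∩ ball w t) (ball v t)
  have e2 := Finset.card_inter_add_card_sdiff (ball u t ∩ ball v t) (ball w t)
  have e3 : (ball u t ∩ ball w t) ∩ ball v t = (ball u t ∩ ball v t) ∩ ball w t := by
    rw [Finset.inter_assoc, Finset.inter_assoc, Finset.inter_comm (ball w t)]
  rw [e3] at e1
  omega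
end
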